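/- For symmetric p×p matrices W and D, with w_i denoting the i-th column of W and e_i the i-th standard basis vector, and D' = D + μ(e_i e_j^T + e_j e_i^T) for i ≠ j, one has tr(WD'WD') = tr(WDWD) + 4μ w_i^T D w_j + 2μ²(W_{ij}² + W_{ii}W_{jj}). -/

import Mathlib

open Matrix

private lemma trace_mul_std {p : ℕ} (A : Matrix (Fin p) (Fin p) ℝ) (i j : Fin p) :
    Matrix.trace (A * Matrix.single i j (1:ℝ)) = A j i := by
  rw [Matrix.trace]
  rw [Finset.sum_eq_single j]
  · simp [Matrix.diag]
  · intro b _ hb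
    simp [Matrix.diag, Matrix.mul_single_apply_of_ne _ _ _ _ _ hb]
  · simp

private lemma sandwich_apply {p : ℕ} (W : Matrix (Fin p) (Fin p) ℝ) (i j a b : Fin p) :
    (W * Matrix.single i j (1:ℝ) * W) a b = W a i * W j b := by
  rw [Matrix.mul_apply, Finset.sum_eq_single j]
  · simp
  · intro k _ hk
    simp [Matrix.mul_single_apply_of_ne _ _ _ _ _ hk]
  · simp

/-- For symmetric `W`, `D`, `i ≠ j` and
`D' = D + μ(eᵢeⱼᵀ + eⱼeᵢᵀ)`, one has
`tr(WD'WD') = tr(WDWD) + 4μ wᵢᵀ D wⱼ + 2μ²(W_{ij}² + W_{ii}W_{jj})`,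
where `wᵢ` is the `i`-th column of `W`. -/
theorem trace_quadratic_update_offdiag {p : ℕ} (W D : Matrix (Fin p) (Fin p) ℝ)
    (hW : W.IsSymm) (hD : D.IsSymm) (μ : ℝ) (i j : Fin p) (hij : i ≠ j) :
    Matrix.trace
        (W * (D + μ • (Matrix.single i j 1 + Matrix.single j i 1)) * W *
          (D + μ • (Matrix.single i j 1 + Matrix.single j i 1))) =
      Matrix.trace (W * D * W * D)
        + 4 * μ * ((Wᵀ i) ⬝ᵥ (D *ᵥ (Wᵀ j)))
        + 2 * μ ^ 2 * ((W i j) ^ 2 + W i i * W j j) := by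
  set Eij := Matrix.single i j (1:ℝ) with hEij
  set Eji := Matrix.single j i (1:ℝ) with hEji
  have hWsym : ∀ a b, W a b = W b a := fun a b => by
    conv_lhs => rw [← hW]
    rfl
  -- expand the product
  have key : W * (D + μ • (Eij + Eji)) * W * (D + μ • (Eij + Eji)) =
      W * D * W * D + μ • (W * D * W * (Eij + Eji)) + μ • (W * (Eij + Eji) * W * D)
        + (μ * μ) • (W * (Eij + Eji) * W * (Eij + Eji)) := by
    simp only [Matrix.mul_add, Matrix.add_mul, Matrix.mul_smul, Matrix.smul_mul, smul_smul,
      smul_add]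
    abel
  rw [key]
  simp only [Matrix.trace_add, Matrix.trace_smul, smul_eq_mul]
  -- cyclic permutation of a cross term
  have hcyc : Matrix.trace (W * (Eij + Eji) * W * D)
      = Matrix.trace (W * D * W * (Eij + Eji)) := by
    rw [show W * (Eij + Eji) * W * D = (W * (Eij + Eji)) * (W * D) by noncomm_ring,
      Matrix.trace_mul_comm,
      show (W * D) * (W * (Eij + Eji)) = W * D * W * (Eij + Eji) by noncomm_ring]
  rw [hcyc]
  -- the WDW matrix is symmetric
  have hWDW : (W * D * W) j i = (W * D * W) i j := by
    have : (W * D * W)ᵀ = W * D * W := by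
      rw [Matrix.transpose_mul, Matrix.transpose_mul, hW.eq, hD.eq]
      noncomm_ring
    conv_lhs => rw [← this]
    rfl
  have h1 : Matrix.trace (W * D * W * (Eij + Eji)) = 2 * (W * D * W) i j := by
    rw [Matrix.mul_add, Matrix.trace_add, hEij, hEji, trace_mul_std, trace_mul_std, hWDW]
    ring
  have h2 : (W * D * W) i j = (Wᵀ i) ⬝ᵥ (D *ᵥ (Wᵀ j)) := by
    simp only [Matrix.mul_apply, dotProduct, Matrix.mulVec, Matrix.transpose_apply,
      Finset.mul_sum, Finset.sum_mul]
    rw [Finset.sum_comm]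
    refine Finset.sum_congr rfl fun k _ => Finset.sum_congr rfl fun l _ => ?_
    have hDsym : D l k = D k l := (congrFun (congrFun hD.eq l) k).symm
    rw [hWsym k i]
    ring
  have h3 : Matrix.trace (W * (Eij + Eji) * W * (Eij + Eji))
      = 2 * ((W i j) ^ 2 + W i i * W j j) := by
    simp only [hEij, hEji, Matrix.mul_add, Matrix.add_mul, Matrix.trace_add, trace_mul_std,
      sandwich_apply]
    rw [hWsym j i]
    ring
  rw [h1, h2, h3]
  ring
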